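/- For all nonzero elements x, y of a real inner product space X, ‖x/‖x‖ − y/‖y‖‖ ≤ 2‖x−y‖/(‖x‖+‖y‖). -/
import Mathlib

open RealInnerProductSpace

theorem dunkl_williams_hilbert {X : Type*} [NormedAddCommGroup X] [InnerProductSpace ℝ X]
    (x y : X) (hx : x ≠ 0) (hy : y ≠ 0) :
    ‖‖x‖⁻¹ • x - ‖y‖⁻¹ • y‖ ≤ 2 * ‖x - y‖ / (‖x‖ + ‖y‖) := by
  have ha : (0:ℝ) < ‖x‖ := norm_pos_iff.mpr hx
  have hb : (0:ℝ) < ‖y‖ := norm_pos_iff.mpr hy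
  have hab : (0:ℝ) < ‖x‖ + ‖y‖ := by linarith
  have ht : |⟪x, y⟫| ≤ ‖x‖ * ‖y‖ := abs_real_inner_le_norm x y
  have ht' : -(‖x‖ * ‖y‖) ≤ ⟪x, y⟫ := neg_le_of_abs_le ht
  have h1 : ‖‖x‖⁻¹ • x - ‖y‖⁻¹ • y‖ ^ 2 = 2 - 2 * ⟪x, y⟫ / (‖x‖ * ‖y‖) := by
    rw [norm_sub_sq_real, norm_smul, norm_smul, real_inner_smul_left, real_inner_smul_right]
    simp only [norm_inv, norm_norm]
    field_simp
    ring
  have h2 : ‖x - y‖ ^ 2 = ‖x‖ ^ 2 - 2 * ⟪x, y⟫ + ‖y‖ ^ 2 := norm_sub_sq_real x y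
  have hsq : ‖‖x‖⁻¹ • x - ‖y‖⁻¹ • y‖ ^ 2 ≤ (2 * ‖x - y‖ / (‖x‖ + ‖y‖)) ^ 2 := by
    have hL : 2 - 2 * ⟪x, y⟫ / (‖x‖ * ‖y‖) = (2 * (‖x‖ * ‖y‖) - 2 * ⟪x, y⟫) / (‖x‖ * ‖y‖) := by
      field_simp
    rw [h1, div_pow, mul_pow, h2, hL, div_le_div_iff₀ (by positivity) (by positivity)]
    have key : 0 ≤ (‖x‖ - ‖y‖) ^ 2 * (⟪x, y⟫ + ‖x‖ * ‖y‖) :=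
      mul_nonneg (sq_nonneg _) (by linarith)
    nlinarith [sq_nonneg (‖x‖ - ‖y‖), mul_pos ha hb]
  nlinarith [norm_nonneg (‖x‖⁻¹ • x - ‖y‖⁻¹ • y), div_nonneg (by positivity : (0:ℝ) ≤ 2 * ‖x - y‖) hab.le, hsq]
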